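/- Let f be an entire function and let C ⊆ ℂ be a closed set with C ≠ ℂ. Then f is bounded on C if and only if there exists a closed Arakeljan set C₁ in ℂ with C ⊆ C₁ such that f is bounded on C₁. -/

import Mathlib

open Set Metric Bornology

private lemma frontier_ccIn_subset {O : Set ℂ} (hO : IsOpen O) (z : ℂ) :
    frontier (connectedComponentIn O z) ⊆ Oᶜ := by
  intro x hx
  by_contra hxO
  rw [mem_compl_iff, not_not] at hxO
  have hUopen : IsOpen (connectedComponentIn O z) := hO.connectedComponentIn
  have hxcl : x ∈ closure (connectedComponentIn O z) := hx.1
  have hxnot : x ∉ connectedComponentIn O z := fun hmem => hx.2 (by rwa [hUopen.interior_eq])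
  have hnhds : connectedComponentIn O x ∈ nhds x :=
    connectedComponentIn_mem_nhds (hO.mem_nhds hxO)
  obtain ⟨y, hy1, hy2⟩ := mem_closure_iff_nhds.mp hxcl _ hnhds
  have e1 : connectedComponentIn O z = connectedComponentIn O y := connectedComponentIn_eq hy2
  have e2 : connectedComponentIn O x = connectedComponentIn O y := connectedComponentIn_eq hy1
  exact hxnot (by rw [e1, ← e2]; exact mem_connectedComponentIn hxO)

private lemma bounded_comp_bound {f : ℂ → ℂ} (hf : Differentiable ℂ f) {O : Set ℂ}
    {z : ℂ} (hb : IsBounded (connectedComponentIn O z)) {M : ℝ}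
    (hfr : ∀ w ∈ frontier (connectedComponentIn O z), ‖f w‖ ≤ M)
    {w : ℂ} (hw : w ∈ connectedComponentIn O z) : ‖f w‖ ≤ M := by
  have := Complex.norm_le_of_forall_mem_frontier_norm_le hb hf.diffContOnCl
    (C := M) (fun u hu => by simpa using hfr u hu) (subset_closure hw)
  simpa using this

private lemma abs_le_iff_normSq {w : ℂ} {M : ℝ} (hM : 0 ≤ M) :
    ‖w‖ ≤ M ↔ Complex.normSq w ≤ M ^ 2 := by
  rw [← Complex.sq_norm]
  constructor
  · intro h; nlinarith [norm_nonneg w]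
  · intro h; nlinarith [norm_nonneg w]

private lemma h_analytic {f : ℂ → ℂ} (hf : Differentiable ℂ f) (s M : ℝ) (t : ℝ) :
    AnalyticAt ℝ (fun t : ℝ =>
      Complex.normSq (f ((s : ℂ) * Complex.exp ((t : ℂ) * Complex.I))) - M ^ 2) t := by
  have hlin : AnalyticAt ℝ (fun t : ℝ => (t : ℂ) * Complex.I) t := by
    have := (ContinuousLinearMap.smulRight (ContinuousLinearMap.id ℝ ℝ) Complex.I).analyticAt t
    have heq : ⇑(ContinuousLinearMap.smulRight (ContinuousLinearMap.id ℝ ℝ) Complex.I)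
        = fun t : ℝ => (t : ℂ) * Complex.I := by
      funext u
      simp [Complex.real_smul]
    rwa [heq] at this
  have hexp : AnalyticAt ℝ (fun z : ℂ => (s : ℂ) * Complex.exp z) ((t : ℂ) * Complex.I) :=
    (analyticAt_const.mul ((Complex.differentiable_exp.analyticAt _))).restrictScalars
  have hγ : AnalyticAt ℝ (fun t : ℝ => (s : ℂ) * Complex.exp ((t : ℂ) * Complex.I)) t := by
    have := AnalyticAt.comp (g := fun z : ℂ => (s : ℂ) * Complex.exp z)
      (f := fun t : ℝ => (t : ℂ) * Complex.I) hexp hlin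
    exact this
  have hfA : AnalyticAt ℝ f ((s : ℂ) * Complex.exp ((t : ℂ) * Complex.I)) :=
    (hf.analyticAt _).restrictScalars
  have hnormSq : ∀ w : ℂ, AnalyticAt ℝ Complex.normSq w := by
    intro w
    have hre := Complex.reCLM.analyticAt w
    have him := Complex.imCLM.analyticAt w
    have : AnalyticAt ℝ (fun z : ℂ => z.re * z.re + z.im * z.im) w :=
      (hre.mul hre).add (him.mul him)
    have heq : (fun z : ℂ => z.re * z.re + z.im * z.im) = Complex.normSq := by
      funext z; rw [Complex.normSq_apply]
    rwa [heq] at this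
  have hfγ : AnalyticAt ℝ (fun t : ℝ => f ((s : ℂ) * Complex.exp ((t : ℂ) * Complex.I))) t := by
    have := AnalyticAt.comp (g := f)
      (f := fun t : ℝ => (s : ℂ) * Complex.exp ((t : ℂ) * Complex.I)) hfA hγ
    exact this
  have hns : AnalyticAt ℝ
      (fun t : ℝ => Complex.normSq (f ((s : ℂ) * Complex.exp ((t : ℂ) * Complex.I)))) t := by
    have := AnalyticAt.comp (g := Complex.normSq)
      (f := fun t : ℝ => f ((s : ℂ) * Complex.exp ((t : ℂ) * Complex.I))) (hnormSq _) hfγ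
    exact this
  exact hns.sub analyticAt_const

private lemma arak_cond2 {f : ℂ → ℂ} (hf : Differentiable ℂ f) {M : ℝ} (hM : 0 ≤ M)
    (K : Set ℂ) (hK : IsCompact K) :
    Bornology.IsBounded (⋃ g ∈ {g : Set ℂ |
      (∃ z ∈ ({w : ℂ | ‖f w‖ ≤ M} ∪ K)ᶜ,
        g = connectedComponentIn ({w : ℂ | ‖f w‖ ≤ M} ∪ K)ᶜ z) ∧
      Bornology.IsBounded g}, g) := by
  classical
  set F : Set ℂ := {w : ℂ | ‖f w‖ ≤ M} with hFdef
  set O : Set ℂ := (F ∪ K)ᶜ with hOdef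
  set G : Set (Set ℂ) :=
    {g : Set ℂ | (∃ z ∈ O, g = connectedComponentIn O z) ∧ Bornology.IsBounded g} with hGdef
  show Bornology.IsBounded (⋃ g ∈ G, g)
  have hFclosed : IsClosed F :=
    isClosed_le (continuous_norm.comp hf.continuous) continuous_const
  have hOopen : IsOpen O := (hFclosed.union hK.isClosed).isOpen_compl
  obtain ⟨r, hr⟩ : ∃ r, K ⊆ ball 0 r := hK.isBounded.subset_ball 0
  set s : ℝ := max r 0 + 1 with hsdef
  have hrs : r < s := lt_of_le_of_lt (le_max_left _ _) (lt_add_one _)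
  have hs0 : 0 < s := lt_of_le_of_lt (le_max_right _ _) (lt_add_one _)
  have hKs : K ⊆ ball 0 s := hr.trans (ball_subset_ball hrs.le)
  have hmemO : ∀ w : ℂ, w ∈ O → M < ‖f w‖ ∧ w ∉ K := by
    intro w hw
    rw [hOdef, mem_compl_iff, mem_union, not_or] at hw
    exact ⟨not_le.mp hw.1, hw.2⟩
  -- Step A : every bounded component contains a point of ball 0 s
  have stepA : ∀ z ∈ O, IsBounded (connectedComponentIn O z) →
      ∃ w ∈ connectedComponentIn O z, ‖w‖ < s := by
    intro z hz hb
    by_contra hno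
    push_neg at hno
    have hsub : connectedComponentIn O z ⊆ {w : ℂ | s ≤ ‖w‖} := fun w hw => hno w hw
    have hclosed' : IsClosed {w : ℂ | s ≤ ‖w‖} := isClosed_le continuous_const continuous_norm
    have hcl : closure (connectedComponentIn O z) ⊆ {w : ℂ | s ≤ ‖w‖} :=
      closure_minimal hsub hclosed'
    have hfr : ∀ w ∈ frontier (connectedComponentIn O z), ‖f w‖ ≤ M := by
      intro w hw
      have hw1 : w ∈ F ∪ K := by
        have := frontier_ccIn_subset hOopen z hw
        rwa [hOdef, compl_compl] at this
      rcases hw1 with hw1 | hw1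
      · exact hw1
      · exfalso
        have h1 : s ≤ ‖w‖ := hcl (frontier_subset_closure hw)
        have h2 : ‖w‖ < s := by simpa [mem_ball, dist_eq_norm] using hKs hw1
        linarith
    have := bounded_comp_bound hf hb hfr (mem_connectedComponentIn hz)
    exact absurd this (not_le.mpr (hmemO z hz).1)
  -- Step B : a bounded component not inside closedBall 0 s meets the sphere
  have stepB : ∀ z ∈ O, IsBounded (connectedComponentIn O z) →
      ¬ connectedComponentIn O z ⊆ closedBall 0 s →
      ∃ w ∈ connectedComponentIn O z, w ∈ sphere (0 : ℂ) s := by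
    intro z hz hb hns
    obtain ⟨w₁, hw₁, hw₁s⟩ := stepA z hz hb
    obtain ⟨w₂, hw₂, hw₂s⟩ : ∃ w ∈ connectedComponentIn O z, ¬ ‖w‖ ≤ s := by
      by_contra hno
      push_neg at hno
      exact hns fun w hw => by simpa [mem_closedBall, dist_eq_norm] using hno w hw
    have himg : IsPreconnected ((fun w : ℂ => ‖w‖) '' connectedComponentIn O z) :=
      isPreconnected_connectedComponentIn.image _ continuous_norm.continuousOn
    have hmem : s ∈ (fun w : ℂ => ‖w‖) '' connectedComponentIn O z := by
      apply himg.Icc_subset ⟨w₁, hw₁, rfl⟩ ⟨w₂, hw₂, rfl⟩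
      exact ⟨hw₁s.le, (not_le.mp hw₂s).le⟩
    obtain ⟨w, hw, hws⟩ := hmem
    exact ⟨w, hw, by simpa [mem_sphere_iff_norm] using hws⟩
  -- the sphere parametrization
  set γ : ℝ → ℂ := fun t => (s : ℂ) * Complex.exp ((t : ℂ) * Complex.I) with hγdef
  set h : ℝ → ℝ := fun t => Complex.normSq (f (γ t)) - M ^ 2 with hhdef
  have hγcont : Continuous γ :=
    continuous_const.mul (Complex.continuous_exp.comp
      (Complex.continuous_ofReal.mul continuous_const))
  have hcont : Continuous h :=
    (Complex.continuous_normSq.comp (hf.continuous.comp hγcont)).sub continuous_const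
  have hanal : ∀ t : ℝ, AnalyticAt ℝ h t := fun t => h_analytic hf s M t
  have habsγ : ∀ t : ℝ, ‖γ t‖ = s := by
    intro t
    rw [hγdef]
    simp only [norm_mul, Complex.norm_real, Real.norm_eq_abs, Complex.norm_exp_ofReal_mul_I, mul_one]
    exact abs_of_pos hs0
  have hγsphere : ∀ t : ℝ, γ t ∈ sphere (0 : ℂ) s := by
    intro t
    rw [mem_sphere_iff_norm, sub_zero]
    exact habsγ t
  have hγarg : ∀ w ∈ sphere (0 : ℂ) s, γ (Complex.arg w) = w := by
    intro w hw
    have habs : (‖w‖ : ℝ) = s := by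
      rw [← sub_zero w, ← mem_sphere_iff_norm ]
      simpa using hw
    rw [hγdef]
    simp only [← habs]
    exact Complex.norm_mul_exp_arg_mul_I w
  have hO_of_pos : ∀ t : ℝ, 0 < h t → γ t ∈ O := by
    intro t ht
    rw [hOdef, mem_compl_iff, mem_union, not_or]
    constructor
    · intro hF'
      have : Complex.normSq (f (γ t)) ≤ M ^ 2 := (abs_le_iff_normSq hM).mp hF'
      rw [hhdef] at ht; simp only at ht; linarith
    · intro hK'
      have : ‖γ t‖ < s := by
        simpa [mem_ball, dist_eq_norm] using hKs hK'
      rw [habsγ t] at this; exact lt_irrefl _ this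
  have hposO : ∀ w ∈ O, 0 < Complex.normSq (f w) - M ^ 2 := by
    intro w hw
    have h1 : M < ‖f w‖ := (hmemO w hw).1
    have h2 : ¬ Complex.normSq (f w) ≤ M ^ 2 := by
      intro hle
      exact absurd ((abs_le_iff_normSq hM).mpr hle) (not_le.mpr h1)
    linarith [not_le.mp h2]
  have hper : Function.Periodic h (2 * Real.pi) := by
    intro t
    have : γ (t + 2 * Real.pi) = γ t := by
      rw [hγdef]
      simp only [Complex.ofReal_add, add_mul, Complex.exp_add]
      push_cast
      rw [Complex.exp_two_pi_mul_I, mul_one]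
    rw [hhdef]; simp only [this]
  -- case analysis on the sphere
  by_cases hcase : ∀ w ∈ sphere (0 : ℂ) s, ‖f w‖ ≤ M
  · -- all bounded components are inside the closed ball
    apply (isBounded_closedBall (x := (0 : ℂ)) (r := s)).subset
    refine iUnion₂_subset fun g hg => ?_
    obtain ⟨⟨z, hz, rfl⟩, hb⟩ := hg
    by_contra hns
    rw [not_subset] at hns
    have hns' : ¬ connectedComponentIn O z ⊆ closedBall 0 s := fun hc => by
      obtain ⟨x, hx1, hx2⟩ := hns; exact hx2 (hc hx1)
    obtain ⟨w, hw, hwsph⟩ := stepB z hz hb hns'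
    exact absurd (hcase w hwsph) (not_le.mpr (hmemO w (connectedComponentIn_subset O z hw)).1)
  · push_neg at hcase
    obtain ⟨p, hpsph, hpM⟩ := hcase
    set tp : ℝ := Complex.arg p with htpdef
    have htp : 0 < h tp := by
      have : γ tp = p := hγarg p hpsph
      rw [hhdef]; simp only [this]
      have h2 : ¬ Complex.normSq (f p) ≤ M ^ 2 := by
        intro hle
        exact absurd ((abs_le_iff_normSq hM).mpr hle) (not_le.mpr hpM)
      linarith [not_le.mp h2]
    -- isolated zeros
    have hiso : ∀ t : ℝ, h t = 0 → ∀ᶠ u in nhdsWithin t {t}ᶜ, h u ≠ 0 := by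
      intro t ht
      rcases (hanal t).eventually_eq_zero_or_eventually_ne_zero with hev | hev
      · exfalso
        have hz : EqOn h 0 univ :=
          AnalyticOnNhd.eqOn_zero_of_preconnected_of_eventuallyEq_zero
            (fun u _ => hanal u) isPreconnected_univ (mem_univ t) hev
        have := hz (mem_univ tp)
        simp only [Pi.zero_apply] at this
        linarith
      · exact hev
    -- the set of "big" bounded components
    set big : Set (Set ℂ) := {g ∈ G | ¬ g ⊆ closedBall (0 : ℂ) s} with hbigdef
    have hwsel : ∀ g ∈ big, ∃ w, w ∈ g ∩ sphere (0 : ℂ) s := by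
      intro g hg
      obtain ⟨⟨⟨z, hz, hgeq⟩, hb⟩, hns⟩ := hg
      subst hgeq
      obtain ⟨w, hw1, hw2⟩ := stepB z hz hb hns
      exact ⟨w, hw1, hw2⟩
    set wsel : Set ℂ → ℂ := fun g =>
      if hg : (g ∩ sphere (0 : ℂ) s).Nonempty then hg.some else 0 with hwseldef
    have hwmem : ∀ g ∈ big, wsel g ∈ g ∩ sphere (0 : ℂ) s := by
      intro g hg
      obtain ⟨w, hw⟩ := hwsel g hg
      have hne : (g ∩ sphere (0 : ℂ) s).Nonempty := ⟨w, hw⟩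
      rw [hwseldef]
      simp only [dif_pos hne]
      exact hne.some_mem
    set θ : Set ℂ → ℝ := fun g => Complex.arg (wsel g) with hθdef
    have hθγ : ∀ g ∈ big, γ (θ g) = wsel g := fun g hg => hγarg _ (hwmem g hg).2
    have hcompeq : ∀ g ∈ big, g = connectedComponentIn O (wsel g) := by
      intro g hg
      obtain ⟨⟨⟨z, hz, hgeq⟩, hb⟩, hns⟩ := hg
      have := (hwmem g ⟨⟨⟨z, hz, hgeq⟩, hb⟩, hns⟩).1
      rw [hgeq] at this ⊢
      exact connectedComponentIn_eq this
    have hθpos : ∀ g ∈ big, 0 < h (θ g) := by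
      intro g hg
      have hwO : wsel g ∈ O := by
        obtain ⟨⟨⟨z, hz, hgeq⟩, hb⟩, hns⟩ := hg
        have hmm := (hwmem g ⟨⟨⟨z, hz, hgeq⟩, hb⟩, hns⟩).1
        have hsubO : g ⊆ O := by rw [hgeq]; exact connectedComponentIn_subset O z
        exact hsubO hmm
      have := hposO _ hwO
      rw [hhdef]
      simp only [hθγ g hg]
      exact this
    by_cases hzero : ∃ t0 : ℝ, h t0 = 0
    swap
    · -- h never vanishes : h > 0 everywhere, sphere inside O, all big components coincide
      push_neg at hzero
      have hpos : ∀ t : ℝ, 0 < h t := by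
        intro t
        rcases lt_trichotomy (h t) 0 with hlt | heq | hgt
        · exfalso
          have hivt := intermediate_value_uIcc (a := t) (b := tp) (f := h) hcont.continuousOn
          have h0 : (0 : ℝ) ∈ uIcc (h t) (h tp) := by
            rw [mem_uIcc]
            left; exact ⟨hlt.le, htp.le⟩
          obtain ⟨u, _, hu⟩ := hivt h0
          exact hzero u hu
        · exact absurd heq (hzero t)
        · exact hgt
      have hsub0 : big.Subsingleton := by
        intro g₁ hg₁ g₂ hg₂
        have key : ∀ g ∈ big, g = connectedComponentIn O (γ 0) := by
          intro g hg
          have harc : γ '' uIcc 0 (θ g) ⊆ O := by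
            rintro _ ⟨t, _, rfl⟩
            exact hO_of_pos t (hpos t)
          have hconn : IsPreconnected (γ '' uIcc 0 (θ g)) :=
            isPreconnected_uIcc.image γ hγcont.continuousOn
          have hmem0 : γ 0 ∈ γ '' uIcc 0 (θ g) := ⟨0, left_mem_uIcc, rfl⟩
          have hsubc : γ '' uIcc 0 (θ g) ⊆ connectedComponentIn O (γ 0) :=
            hconn.subset_connectedComponentIn hmem0 harc
          have hwg : wsel g ∈ connectedComponentIn O (γ 0) := by
            rw [← hθγ g hg]
            exact hsubc ⟨θ g, right_mem_uIcc, rfl⟩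
          rw [hcompeq g hg]
          exact (connectedComponentIn_eq hwg).symm
        rw [key g₁ hg₁, key g₂ hg₂]
      have hbigfin : big.Finite := hsub0.finite
      have hcover : (⋃ g ∈ G, g) ⊆ closedBall (0 : ℂ) s ∪ ⋃ g ∈ big, g := by
        refine iUnion₂_subset fun g hg => ?_
        by_cases hsubg : g ⊆ closedBall (0 : ℂ) s
        · exact fun x hx => Or.inl (hsubg hx)
        · exact fun x hx => Or.inr (mem_biUnion ⟨hg, hsubg⟩ hx)
      exact (isBounded_closedBall.union
        ((isBounded_biUnion hbigfin).mpr fun g hg => hg.1.2)).subset hcover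
    · obtain ⟨t0, ht0⟩ := hzero
      -- finiteness of zeros in a compact window
      set Z : Set ℝ := {t : ℝ | h t = 0} with hZdef
      have hZclosed : IsClosed Z := isClosed_eq hcont continuous_const
      have hZfin : (Z ∩ Icc (-Real.pi) (3 * Real.pi + 1)).Finite := by
        by_contra hinf
        rw [← Set.not_infinite, not_not] at hinf
        have hcpt : IsCompact (Z ∩ Icc (-Real.pi) (3 * Real.pi + 1)) :=
          (isCompact_Icc).of_isClosed_subset (hZclosed.inter isClosed_Icc) inter_subset_right
        obtain ⟨x, hxmem, hacc⟩ := hinf.exists_accPt_of_subset_isCompact hcpt Subset.rfl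
        have hev := hiso x hxmem.1
        have h1 : ∀ᶠ u in (nhdsWithin x {x}ᶜ ⊓
            Filter.principal (Z ∩ Icc (-Real.pi) (3 * Real.pi + 1))), h u ≠ 0 :=
          hev.filter_mono inf_le_left
        have h2 : ∀ᶠ u in (nhdsWithin x {x}ᶜ ⊓
            Filter.principal (Z ∩ Icc (-Real.pi) (3 * Real.pi + 1))), h u = 0 :=
          Filter.eventually_inf_principal.mpr (Filter.Eventually.of_forall fun u hu => hu.1)
        have hNB : (nhdsWithin x {x}ᶜ ⊓
            Filter.principal (Z ∩ Icc (-Real.pi) (3 * Real.pi + 1))).NeBot := hacc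
        haveI := hNB
        obtain ⟨u, hu1, hu2⟩ := (h1.and h2).exists
        exact hu1 hu2
      -- next-zero function
      set ζ : Set ℂ → ℝ := fun g => sInf (Ici (θ g) ∩ Z) with hζdef
      have hπ : (0 : ℝ) < 2 * Real.pi := by positivity
      have hζspec : ∀ g ∈ big, ζ g ∈ Ici (θ g) ∩ Z ∧ (∀ t ∈ Ici (θ g) ∩ Z, ζ g ≤ t) ∧
          ζ g ≤ θ g + 2 * Real.pi := by
        intro g hg
        set k : ℤ := ⌈(θ g - t0) / (2 * Real.pi)⌉ with hkdef
        have hk1 : (θ g - t0) / (2 * Real.pi) ≤ (k : ℝ) := Int.le_ceil _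
        have hk2 : (k : ℝ) < (θ g - t0) / (2 * Real.pi) + 1 := Int.ceil_lt_add_one _
        have hk1' : θ g - t0 ≤ (k : ℝ) * (2 * Real.pi) := by
          rw [← div_le_iff₀ hπ]; exact hk1
        have hk2' : (k : ℝ) * (2 * Real.pi) < θ g - t0 + 2 * Real.pi := by
          have := mul_lt_mul_of_pos_right hk2 hπ
          calc (k : ℝ) * (2 * Real.pi) < ((θ g - t0) / (2 * Real.pi) + 1) * (2 * Real.pi) := this
            _ = θ g - t0 + 2 * Real.pi := by field_simp
        have hzk : h (t0 + (k : ℝ) * (2 * Real.pi)) = 0 := by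
          have := (hper.int_mul k) t0
          push_cast at this
          rw [this]
          exact ht0
        have hmemS : t0 + (k : ℝ) * (2 * Real.pi) ∈ Ici (θ g) ∩ Z :=
          ⟨by simp only [mem_Ici]; linarith, hzk⟩
        have hne : (Ici (θ g) ∩ Z).Nonempty := ⟨_, hmemS⟩
        have hcl : IsClosed (Ici (θ g) ∩ Z) := isClosed_Ici.inter hZclosed
        have hbdd : BddBelow (Ici (θ g) ∩ Z) := ⟨θ g, fun t ht => ht.1⟩
        refine ⟨hcl.csInf_mem hne hbdd, fun t ht => csInf_le hbdd ht, ?_⟩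
        exact le_trans (csInf_le hbdd hmemS) (by linarith)
      -- injectivity
      have hsame : ∀ g₁ ∈ big, ∀ g₂ ∈ big, ζ g₁ = ζ g₂ → θ g₁ ≤ θ g₂ → g₁ = g₂ := by
        intro g₁ hg₁ g₂ hg₂ hζeq hθle
        obtain ⟨⟨hζ1a, hζ1b⟩, hζ1min, _⟩ := hζspec g₁ hg₁
        obtain ⟨⟨hζ2a, hζ2b⟩, hζ2min, _⟩ := hζspec g₂ hg₂
        have hθ1 := hθpos g₁ hg₁
        have hθ2 := hθpos g₂ hg₂
        have hposIcc : ∀ t ∈ Icc (θ g₁) (θ g₂), 0 < h t := by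
          intro t ht
          by_contra hle
          push_neg at hle
          rcases eq_or_lt_of_le hle with heq | hlt
          · -- h t = 0 : then ζ g₁ ≤ t ≤ θ g₂ ≤ ζ g₂ = ζ g₁, forcing t = θ g₂
            have hz : ζ g₁ ≤ t := hζ1min t ⟨ht.1, heq⟩
            have : t = θ g₂ := le_antisymm ht.2 (by
              have := hζ2a
              rw [mem_Ici] at this
              linarith [hζeq ▸ hz])
            rw [this] at heq
            exact hθ2.ne' heq
          · -- h t < 0 : IVT gives a zero u ∈ [θ g₁, t], then ζ g₁ ≤ u ≤ t ≤ θ g₂ ≤ ζ g₂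
            have hivt := intermediate_value_uIcc (a := θ g₁) (b := t) (f := h)
              hcont.continuousOn
            have h0 : (0 : ℝ) ∈ uIcc (h (θ g₁)) (h t) := by
              rw [mem_uIcc]; right; exact ⟨hlt.le, hθ1.le⟩
            obtain ⟨u, humem, hu⟩ := hivt h0
            rw [uIcc_of_le ht.1] at humem
            have hz : ζ g₁ ≤ u := hζ1min u ⟨humem.1, hu⟩
            have hle2 : θ g₂ ≤ ζ g₂ := by rw [← mem_Ici]; exact hζ2a
            have : u = t ∧ t = θ g₂ := by
              constructor <;> [skip; skip] <;> linarith [hζeq ▸ hz, humem.2, ht.2]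
            obtain ⟨hut, htθ⟩ := this
            rw [hut, htθ] at hu
            exact hθ2.ne' hu
        have harc : γ '' Icc (θ g₁) (θ g₂) ⊆ O := by
          rintro _ ⟨t, ht, rfl⟩
          exact hO_of_pos t (hposIcc t ht)
        have hconn : IsPreconnected (γ '' Icc (θ g₁) (θ g₂)) :=
          isPreconnected_Icc.image γ hγcont.continuousOn
        have hmem1 : γ (θ g₁) ∈ γ '' Icc (θ g₁) (θ g₂) := ⟨θ g₁, ⟨le_rfl, hθle⟩, rfl⟩
        have hsubc : γ '' Icc (θ g₁) (θ g₂) ⊆ connectedComponentIn O (wsel g₁) := by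
          rw [← hθγ g₁ hg₁]
          exact hconn.subset_connectedComponentIn hmem1 harc
        have hw2in : wsel g₂ ∈ connectedComponentIn O (wsel g₁) := by
          rw [← hθγ g₂ hg₂]
          exact hsubc ⟨θ g₂, ⟨hθle, le_rfl⟩, rfl⟩
        rw [hcompeq g₁ hg₁, hcompeq g₂ hg₂]
        exact connectedComponentIn_eq hw2in
      have hinj : Set.InjOn ζ big := by
        intro g₁ hg₁ g₂ hg₂ heq
        rcases le_total (θ g₁) (θ g₂) with hle | hle
        · exact hsame g₁ hg₁ g₂ hg₂ heq hle
        · exact (hsame g₂ hg₂ g₁ hg₁ heq.symm hle).symm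
      have himg : ζ '' big ⊆ Z ∩ Icc (-Real.pi) (3 * Real.pi + 1) := by
        rintro _ ⟨g, hg, rfl⟩
        obtain ⟨⟨hζa, hζb⟩, _, hζle⟩ := hζspec g hg
        have harg1 : -Real.pi < θ g := Complex.neg_pi_lt_arg _
        have harg2 : θ g ≤ Real.pi := Complex.arg_le_pi _
        have hpi : (1 : ℝ) ≤ Real.pi := by linarith [Real.pi_gt_three]
        rw [mem_Ici] at hζa
        exact ⟨hζb, ⟨by linarith, by linarith⟩⟩
      have hbigfin : big.Finite := Set.Finite.of_finite_image (hZfin.subset himg) hinj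
      have hcover : (⋃ g ∈ G, g) ⊆ closedBall (0 : ℂ) s ∪ ⋃ g ∈ big, g := by
        refine iUnion₂_subset fun g hg => ?_
        by_cases hsubg : g ⊆ closedBall (0 : ℂ) s
        · exact fun x hx => Or.inl (hsubg hx)
        · exact fun x hx => Or.inr (mem_biUnion ⟨hg, hsubg⟩ hx)
      exact (isBounded_closedBall.union
        ((isBounded_biUnion hbigfin).mpr fun g hg => hg.1.2)).subset hcover

private lemma arak_cond1 {f : ℂ → ℂ} (hf : Differentiable ℂ f) (M : ℝ) :
    ∀ z ∈ {w : ℂ | ‖f w‖ ≤ M}ᶜ,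
      ¬ Bornology.IsBounded (connectedComponentIn {w : ℂ | ‖f w‖ ≤ M}ᶜ z) := by
  intro z hz hb
  have hFclosed : IsClosed {w : ℂ | ‖f w‖ ≤ M} :=
    isClosed_le (continuous_norm.comp hf.continuous) continuous_const
  have hO : IsOpen {w : ℂ | ‖f w‖ ≤ M}ᶜ := hFclosed.isOpen_compl
  have hfr : ∀ w ∈ frontier (connectedComponentIn {w : ℂ | ‖f w‖ ≤ M}ᶜ z),
      ‖f w‖ ≤ M := by
    intro w hw
    have := frontier_ccIn_subset hO z hw
    rwa [compl_compl] at this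
  have hle : ‖f z‖ ≤ M :=
    bounded_comp_bound hf hb hfr (mem_connectedComponentIn hz)
  exact hz hle

/-- A Jordan curve: the image of a continuous injective map from the unit circle into ℂ. -/
def IsJordanCurve (J : Set ℂ) : Prop :=
  ∃ f : ℂ → ℂ, ContinuousOn f (sphere (0 : ℂ) 1) ∧ Set.InjOn f (sphere (0 : ℂ) 1) ∧
    J = f '' (sphere (0 : ℂ) 1)

/-- The topological boundary of `K` is a finite union of pairwise disjoint Jordan curves. -/
def JordanBoundary (K : Set ℂ) : Prop :=
  ∃ (n : ℕ) (J : Fin n → Set ℂ), (∀ i, IsJordanCurve (J i)) ∧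
    (Pairwise fun i j => Disjoint (J i) (J j)) ∧ frontier K = ⋃ i, J i

/-- A closed set `F ⊆ ℂ` is an Arakeljan set in `ℂ`: every connected component of `ℂ \ F`
is unbounded, and for every connected compact `K` whose boundary is a finite union of
pairwise disjoint Jordan curves, the union of all bounded connected components of
`ℂ \ (F ∪ K)` is bounded. -/
def IsArakeljanC (F : Set ℂ) : Prop :=
  (∀ z ∈ Fᶜ, ¬ Bornology.IsBounded (connectedComponentIn Fᶜ z)) ∧
  ∀ K : Set ℂ, IsCompact K → IsConnected K → JordanBoundary K →
    Bornology.IsBounded (⋃ g ∈ {g : Set ℂ |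
      (∃ z ∈ (F ∪ K)ᶜ, g = connectedComponentIn (F ∪ K)ᶜ z) ∧ Bornology.IsBounded g}, g)

/-- An entire function `f` is bounded on a closed set `C ≠ ℂ` iff there
is a closed Arakeljan set `C₁ ⊇ C` in `ℂ` on which `f` is bounded. -/
theorem entire_bounded_iff_exists_arakeljan_superset
    (f : ℂ → ℂ) (hf : Differentiable ℂ f)
    (C : Set ℂ) (hC : IsClosed C) (hCne : C ≠ Set.univ) :
    (∃ M : ℝ, ∀ z ∈ C, ‖f z‖ ≤ M) ↔
      ∃ C₁ : Set ℂ, IsClosed C₁ ∧ IsArakeljanC C₁ ∧ C ⊆ C₁ ∧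
        ∃ M : ℝ, ∀ z ∈ C₁, ‖f z‖ ≤ M := by
  constructor
  · rintro ⟨M₀, hM₀⟩
    refine ⟨{z : ℂ | ‖f z‖ ≤ max M₀ 0}, ?_, ⟨?_, ?_⟩, ?_, max M₀ 0, fun z hz => hz⟩
    · exact isClosed_le (continuous_norm.comp hf.continuous) continuous_const
    · exact arak_cond1 hf (max M₀ 0)
    · intro K hK _ _
      exact arak_cond2 hf (le_max_right M₀ 0) K hK
    · exact fun z hz => le_trans (hM₀ z hz) (le_max_left _ _)
  · rintro ⟨C₁, _, _, hsub, M, hMb⟩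
    exact ⟨M, fun z hz => hMb z (hsub hz)⟩
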